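/- Let D = (x_1,...,x_n) be points in ℝ^d with n ≥ 2, and let j ∈ [n]. Suppose that for every i ≠ j there exists a point y_i ∈ ℝ^d with ‖x_i − y_i‖ ≤ r and ‖x_j − y_i‖ ≤ r. Then the Euclidean distance between the average of all n points and the average of the n−1 points excluding x_j is at most 2r/n. -/

import Mathlib

open Finset

/-- Sensitivity of the average on friendly databases: if every point `x i` (for `i ≠ j`)
has a common `r`-close point with `x j`, then the average of all `n` points and the
average of the `n-1` points excluding `x j` differ by at most `2r/n` in Euclidean norm. -/
theorem avg_sensitivity_of_friendly {d n : ℕ} (hn : 2 ≤ n)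
    (x : Fin n → EuclideanSpace ℝ (Fin d)) (j : Fin n) (r : ℝ)
    (h : ∀ i : Fin n, i ≠ j → ∃ y : EuclideanSpace ℝ (Fin d),
        ‖x i - y‖ ≤ r ∧ ‖x j - y‖ ≤ r) :
    ‖(n : ℝ)⁻¹ • ∑ i, x i - ((n : ℝ) - 1)⁻¹ • ∑ i ∈ univ.erase j, x i‖ ≤ 2 * r / n := by
  have hn2 : (2:ℝ) ≤ (n:ℝ) := by exact_mod_cast hn
  have hn0 : (n:ℝ) ≠ 0 := by linarith
  have hn1 : (n:ℝ) - 1 ≠ 0 := by linarith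
  have hcard : (univ.erase j).card = n - 1 := by simp [Finset.card_erase_of_mem]
  have hcastcard : ((univ.erase j).card : ℝ) = (n:ℝ) - 1 := by
    rw [hcard, Nat.cast_sub (by omega : 1 ≤ n)]; simp
  have hr : 0 ≤ r := by
    have : Nontrivial (Fin n) := Fin.nontrivial_iff_two_le.mpr hn
    obtain ⟨i, hi⟩ := exists_ne j
    obtain ⟨y, h1, _⟩ := h i hi
    exact le_trans (norm_nonneg _) h1
  have hsub : ∑ i ∈ univ.erase j, (x j - x i)
      = ((n:ℝ) - 1) • x j - ∑ i ∈ univ.erase j, x i := by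
    rw [Finset.sum_sub_distrib, Finset.sum_const, ← Nat.cast_smul_eq_nsmul ℝ, hcastcard]
  have key : (n : ℝ)⁻¹ • ∑ i, x i - ((n : ℝ) - 1)⁻¹ • ∑ i ∈ univ.erase j, x i
      = ((n : ℝ)⁻¹ * ((n : ℝ) - 1)⁻¹) • ∑ i ∈ univ.erase j, (x j - x i) := by
    have hsum : ∑ i, x i = x j + ∑ i ∈ univ.erase j, x i :=
      (Finset.add_sum_erase _ _ (mem_univ j)).symm
    rw [hsum, hsub]
    match_scalars <;> field_simp <;> ring
  rw [key, norm_smul]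
  have hbound : ‖∑ i ∈ univ.erase j, (x j - x i)‖ ≤ ((n:ℝ) - 1) * (2 * r) := by
    calc ‖∑ i ∈ univ.erase j, (x j - x i)‖
        ≤ ∑ i ∈ univ.erase j, ‖x j - x i‖ := norm_sum_le _ _
      _ ≤ ∑ _i ∈ univ.erase j, (2 * r) := by
          refine Finset.sum_le_sum fun i hi => ?_
          obtain ⟨y, h1, h2⟩ := h i (Finset.ne_of_mem_erase hi)
          have htri : ‖x j - x i‖ ≤ ‖x j - y‖ + ‖x i - y‖ := by
            have hd := dist_triangle (x j) y (x i)
            simp only [dist_eq_norm] at hd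
            calc ‖x j - x i‖ ≤ ‖x j - y‖ + ‖y - x i‖ := hd
              _ = ‖x j - y‖ + ‖x i - y‖ := by rw [norm_sub_rev y]
          linarith
      _ = ((n:ℝ) - 1) * (2 * r) := by
          rw [Finset.sum_const, nsmul_eq_mul, hcastcard]
  have habs : |(n : ℝ)⁻¹ * ((n : ℝ) - 1)⁻¹| = (n : ℝ)⁻¹ * ((n : ℝ) - 1)⁻¹ := by
    rw [abs_of_nonneg]
    have : (0:ℝ) < (n:ℝ) - 1 := by linarith
    positivity
  rw [Real.norm_eq_abs, habs]
  calc (n : ℝ)⁻¹ * ((n : ℝ) - 1)⁻¹ * ‖∑ i ∈ univ.erase j, (x j - x i)‖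
      ≤ (n : ℝ)⁻¹ * ((n : ℝ) - 1)⁻¹ * (((n:ℝ) - 1) * (2 * r)) := by
        apply mul_le_mul_of_nonneg_left hbound
        have : (0:ℝ) < (n:ℝ) - 1 := by linarith
        positivity
    _ = 2 * r / n := by field_simp
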